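/- Let R be a finite commutative local principal ring and let a, a', b, b' ∈ R. Write M(a,b) for the 2×2 matrix with first row (a,b) and zero second row. Then M(a,b) and M(a',b') are conjugate under GL₂(R) if and only if a = a' and there exists a unit u ∈ U(R) such that b' − ub lies in the ideal (a). -/

import Mathlib

/-- Over a finite commutative local principal ring, `M(a,b)` and `M(a',b')` are conjugate
under `GL₂(R)` iff `a = a'` and `b' - u * b ∈ (a)` for some unit `u`. -/
theorem conjugate_M_iff (R : Type*) [CommRing R] [Finite R] [IsLocalRing R]
    [IsPrincipalIdealRing R] (a a' b b' : R) :
    (∃ P : (Matrix (Fin 2) (Fin 2) R)ˣ,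
        !![a', b'; 0, 0] =
          (P : Matrix (Fin 2) (Fin 2) R) * !![a, b; 0, 0] *
            ((P⁻¹ : _) : Matrix (Fin 2) (Fin 2) R)) ↔
      a = a' ∧ ∃ u : R, IsUnit u ∧ b' - u * b ∈ Ideal.span {a} := by
  constructor
  · rintro ⟨P, hP⟩
    have haa : a = a' := by
      have := congrArg Matrix.trace hP
      rw [Matrix.trace_units_conj] at this
      simpa [Matrix.trace_fin_two] using this.symm
    refine ⟨haa, ?_⟩
    subst haa
    have hcomm : !![a, b'; 0, 0] * (P : Matrix (Fin 2) (Fin 2) R)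
        = (P : Matrix (Fin 2) (Fin 2) R) * !![a, b; 0, 0] := by
      rw [hP, Matrix.mul_assoc, Matrix.mul_assoc, Units.inv_mul, Matrix.mul_one]
    set p := (P : Matrix (Fin 2) (Fin 2) R) 0 0 with hp
    set q := (P : Matrix (Fin 2) (Fin 2) R) 0 1 with hq
    set r := (P : Matrix (Fin 2) (Fin 2) R) 1 0 with hr
    set s := (P : Matrix (Fin 2) (Fin 2) R) 1 1 with hs
    have e00 : a * p + b' * r = p * a := by
      have := congrFun (congrFun hcomm 0) 0
      simpa [Matrix.mul_apply, Fin.sum_univ_two, ← hp, ← hq, ← hr, ← hs] using this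
    have e01 : a * q + b' * s = p * b := by
      have := congrFun (congrFun hcomm 0) 1
      simpa [Matrix.mul_apply, Fin.sum_univ_two, ← hp, ← hq, ← hr, ← hs] using this
    have e10 : r * a = 0 := by
      have := congrFun (congrFun hcomm 1) 0
      simpa [Matrix.mul_apply, Fin.sum_univ_two, ← hp, ← hq, ← hr, ← hs] using this.symm
    have e11 : r * b = 0 := by
      have := congrFun (congrFun hcomm 1) 1
      simpa [Matrix.mul_apply, Fin.sum_univ_two, ← hp, ← hq, ← hr, ← hs] using this.symm
    have hdet : IsUnit (p * s + -(q * r)) := by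
      have := (Matrix.isUnit_iff_isUnit_det _).mp P.isUnit
      rw [Matrix.det_fin_two] at this
      simpa [sub_eq_add_neg, ← hp, ← hq, ← hr, ← hs] using this
    rcases IsLocalRing.isUnit_or_isUnit_of_isUnit_add hdet with hps | hqr
    · have hpU : IsUnit p := isUnit_of_mul_isUnit_left hps
      have hsU : IsUnit s := isUnit_of_mul_isUnit_right hps
      obtain ⟨w, hw⟩ := hsU.exists_left_inv
      refine ⟨w * p, (IsUnit.of_mul_eq_one s hw).mul hpU, ?_⟩
      rw [Ideal.mem_span_singleton]
      exact ⟨-(w * q), by linear_combination w * e01 - b' * hw⟩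
    · have hrU : IsUnit r := isUnit_of_mul_isUnit_right (by simpa using hqr.neg)
      obtain ⟨w, hw⟩ := hrU.exists_left_inv
      have ha : a = 0 := by linear_combination w * e10 - a * hw
      have hb : b = 0 := by linear_combination w * e11 - b * hw
      have hb' : b' = 0 := by linear_combination w * e00 - b' * hw
      exact ⟨1, isUnit_one, by rw [ha, hb, hb']; simp⟩
  · rintro ⟨rfl, u, hu, hmem⟩
    rw [Ideal.mem_span_singleton] at hmem
    obtain ⟨c, hc⟩ := hmem
    obtain ⟨v, hv⟩ := hu.exists_right_inv
    refine ⟨⟨!![1, -(v * c); 0, v], !![1, c; 0, u], ?_, ?_⟩, ?_⟩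
    · ext i j
      fin_cases i <;> fin_cases j <;>
        simp [Matrix.mul_apply, Fin.sum_univ_two] <;> (first | ring1 | linear_combination hv | linear_combination (-c) * hv)
    · ext i j
      fin_cases i <;> fin_cases j <;>
        simp [Matrix.mul_apply, Fin.sum_univ_two] <;> (first | ring1 | linear_combination hv | linear_combination c * hv)
    · show !![a, b'; 0, 0] = !![1, -(v * c); 0, v] * !![a, b; 0, 0] * !![1, c; 0, u]
      ext i j
      fin_cases i <;> fin_cases j <;>
        simp [Matrix.mul_apply, Fin.sum_univ_two] <;> (first | ring1 | linear_combination hc)
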